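/- For any real square matrix S, the operator norm of the matrix exponential satisfies ‖exp(S)‖ ≤ exp(μ(S)), where μ(S) = (1/2) λ_max(S + Sᵀ) is the logarithmic norm of S (λ_max denoting the maximal eigenvalue of the symmetric matrix S + Sᵀ). -/

import Mathlib

open Matrix
open scoped RealInnerProductSpace

lemma rayleigh_le {n : ℕ} (M : Matrix (Fin n) (Fin n) ℝ) (hM : M.IsHermitian)
    (y : EuclideanSpace ℝ (Fin n)) :
    ⟪toEuclideanCLM (𝕜 := ℝ) M y, y⟫ ≤ (⨆ i, hM.eigenvalues i) * ‖y‖ ^ 2 := by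
  set b := hM.eigenvectorBasis with hb
  set T := toEuclideanCLM (𝕜 := ℝ) M with hT
  have hTb : ∀ i, T (b i) = hM.eigenvalues i • b i := by
    intro i
    have h1 := hM.mulVec_eigenvectorBasis i
    apply (WithLp.equiv 2 _).injective
    simpa [hT] using congrArg (fun v => v) h1
  have hsa : _root_.IsSelfAdjoint T := by
    show star T = T
    rw [hT, ← map_star]
    congr 1
  have hsymm : (T : EuclideanSpace ℝ (Fin n) →ₗ[ℝ] EuclideanSpace ℝ (Fin n)).IsSymmetric :=
    (ContinuousLinearMap.isSelfAdjoint_iff_isSymmetric).1 hsa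
  have hinner : ∀ u v : EuclideanSpace ℝ (Fin n),
      ⟪u, v⟫ = ∑ i, b.repr u i * b.repr v i := by
    intro u v
    rw [← b.repr.inner_map_map u v, PiLp.inner_apply]
    simp only [RCLike.inner_apply, conj_trivial]
    exact Finset.sum_congr rfl fun i _ => mul_comm _ _
  have hrepr : ∀ i, b.repr (T y) i = hM.eigenvalues i * b.repr y i := by
    intro i
    rw [b.repr_apply_apply, b.repr_apply_apply]
    have h2 := hsymm (b i) y
    simp only [ContinuousLinearMap.coe_coe] at h2
    rw [← h2, hTb i, real_inner_smul_left]
  have hsum : ⟪T y, y⟫ = ∑ i, hM.eigenvalues i * (b.repr y i * b.repr y i) := by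
    rw [hinner (T y) y]
    exact Finset.sum_congr rfl fun i _ => by rw [hrepr i, mul_assoc]
  have hnorm : ‖y‖ ^ 2 = ∑ i, b.repr y i * b.repr y i := by
    rw [← real_inner_self_eq_norm_sq, hinner y y]
  rw [hsum, hnorm, Finset.mul_sum]
  apply Finset.sum_le_sum
  intro i _
  exact mul_le_mul_of_nonneg_right
    (le_ciSup (Set.Finite.bddAbove (Set.finite_range _)) i) (mul_self_nonneg _)

/-- The Euclidean operator norm of the matrix exponential is bounded by the
exponential of the logarithmic norm `μ(S) = ½ λ_max(S + Sᵀ)`. -/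
theorem opNorm_exp_le_exp_logNorm {n : ℕ}
    (S : Matrix (Fin n) (Fin n) ℝ)
    (h : (S + Sᵀ).IsHermitian) :
    ‖Matrix.toEuclideanCLM (𝕜 := ℝ) (NormedSpace.exp S)‖ ≤
      Real.exp ((1 / 2) * ⨆ i, h.eigenvalues i) := by
  set E := EuclideanSpace ℝ (Fin n)
  set A : E →L[ℝ] E := toEuclideanCLM (𝕜 := ℝ) S with hA
  have hcont : Continuous (toEuclideanCLM (𝕜 := ℝ) (n := Fin n)) := by
    exact LinearMap.continuous_of_finiteDimensional
      ({ toFun := ⇑(toEuclideanCLM (𝕜 := ℝ) (n := Fin n)),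
         map_add' := fun a b => map_add _ a b,
         map_smul' := fun c a => map_smul _ c a } :
        Matrix (Fin n) (Fin n) ℝ →ₗ[ℝ] (E →L[ℝ] E))
  have hexp : toEuclideanCLM (𝕜 := ℝ) (NormedSpace.exp S) = NormedSpace.exp A := by
    letI : SeminormedRing (Matrix (Fin n) (Fin n) ℝ) := Matrix.linftyOpSemiNormedRing
    letI : NormedRing (Matrix (Fin n) (Fin n) ℝ) := Matrix.linftyOpNormedRing
    letI : NormedAlgebra ℝ (Matrix (Fin n) (Fin n) ℝ) := Matrix.linftyOpNormedAlgebra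
    letI : NormedAlgebra ℚ (Matrix (Fin n) (Fin n) ℝ) := .restrictScalars ℚ ℝ _
    exact NormedSpace.map_exp (toEuclideanCLM (𝕜 := ℝ) (n := Fin n)) hcont S
  rw [hexp]
  set L : ℝ := ⨆ i, h.eigenvalues i with hL
  refine ContinuousLinearMap.opNorm_le_bound _ (Real.exp_nonneg _) fun x => ?_
  -- the flow
  set f : ℝ → E := fun t => NormedSpace.exp (t • A) x with hf
  have hf' : ∀ t : ℝ, HasDerivAt f (A (f t)) t := by
    intro t
    have h1 : HasDerivAt (fun u : ℝ => NormedSpace.exp (u • A))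
        (A * NormedSpace.exp (t • A)) t := hasDerivAt_exp_smul_const' A t
    have h2 := h1.clm_apply (hasDerivAt_const t x)
    simpa [hf, ContinuousLinearMap.mul_apply] using h2
  set φ : ℝ → ℝ := fun t => ⟪f t, f t⟫ with hφdef
  have hφ : ∀ t : ℝ, HasDerivAt φ (2 * ⟪A (f t), f t⟫) t := by
    intro t
    have := (hf' t).inner ℝ (hf' t)
    exact this.congr_deriv (by rw [real_inner_comm (f t) (A (f t))]; ring)
  have hbound : ∀ t : ℝ, 2 * ⟪A (f t), f t⟫ ≤ L * φ t := by
    intro t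
    have key := rayleigh_le (S + Sᵀ) h (f t)
    have h2 : 2 * ⟪A (f t), f t⟫ = ⟪toEuclideanCLM (𝕜 := ℝ) (S + Sᵀ) (f t), f t⟫ := by
      rw [map_add]
      have h3 : toEuclideanCLM (𝕜 := ℝ) Sᵀ = star A := by
        rw [hA, ← map_star]
        congr 1
      rw [ContinuousLinearMap.add_apply, inner_add_left, h3,
        ContinuousLinearMap.star_eq_adjoint, ContinuousLinearMap.adjoint_inner_left,
        real_inner_comm (f t) (A (f t))]
      ring
    have h4 : φ t = ‖f t‖ ^ 2 := real_inner_self_eq_norm_sq (f t)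
    rw [h2, h4]
    exact key
  set g : ℝ → ℝ := fun t => φ t * Real.exp (-(L * t)) with hg
  have hg' : ∀ t : ℝ, HasDerivAt g
      ((2 * ⟪A (f t), f t⟫ - L * φ t) * Real.exp (-(L * t))) t := by
    intro t
    have hexp' : HasDerivAt (fun t : ℝ => Real.exp (-(L * t)))
        (Real.exp (-(L * t)) * (-L)) t := by
      have : HasDerivAt (fun t : ℝ => -(L * t)) (-L) t := by
        exact ((hasDerivAt_id t).const_mul L).neg.congr_deriv (by ring)
      simpa using this.exp
    have := (hφ t).mul hexp'
    exact this.congr_deriv (by ring)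
  have hmono : AntitoneOn g (Set.Icc 0 1) := by
    apply antitoneOn_of_deriv_nonpos (convex_Icc 0 1)
    · exact fun t _ => (hg' t).continuousAt.continuousWithinAt
    · intro t ht
      exact (hg' t).differentiableAt.differentiableWithinAt
    · intro t ht
      rw [(hg' t).deriv]
      apply mul_nonpos_of_nonpos_of_nonneg
      · linarith [hbound t]
      · exact (Real.exp_pos _).le
  have hg10 : g 1 ≤ g 0 := hmono (Set.left_mem_Icc.2 zero_le_one)
    (Set.right_mem_Icc.2 zero_le_one) zero_le_one
  have hf0 : f 0 = x := by
    show NormedSpace.exp ((0:ℝ) • A) x = x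
    have h0 : (0:ℝ) • A = 0 := by ext v; simp
    rw [h0, NormedSpace.exp_zero, ContinuousLinearMap.one_apply]
  have hf1 : f 1 = NormedSpace.exp A x := by simp [hf]
  have hkey : ‖NormedSpace.exp A x‖ ^ 2 ≤ Real.exp L * ‖x‖ ^ 2 := by
    have hg0 : g 0 = ‖x‖ ^ 2 := by
      simp [hg, hφdef, hf0, real_inner_self_eq_norm_sq]
    have hg1 : g 1 = ‖NormedSpace.exp A x‖ ^ 2 * Real.exp (-(L * 1)) := by
      rw [hg]
      simp only [hφdef, hf1, real_inner_self_eq_norm_sq]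
    rw [hg1, hg0] at hg10
    have := mul_le_mul_of_nonneg_right hg10 (Real.exp_pos (L * 1)).le
    rw [mul_assoc, ← Real.exp_add] at this
    simpa [mul_comm] using this
  have hrhs : (Real.exp ((1 / 2) * L) * ‖x‖) ^ 2 = Real.exp L * ‖x‖ ^ 2 := by
    have hsq : Real.exp ((1 / 2) * L) ^ 2 = Real.exp L := by
      rw [sq, ← Real.exp_add]; ring_nf
    rw [mul_pow, hsq]
  calc ‖NormedSpace.exp A x‖
      = Real.sqrt (‖NormedSpace.exp A x‖ ^ 2) := (Real.sqrt_sq (norm_nonneg _)).symm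
    _ ≤ Real.sqrt ((Real.exp ((1 / 2) * L) * ‖x‖) ^ 2) := by
        apply Real.sqrt_le_sqrt; rw [hrhs]; exact hkey
    _ = Real.exp ((1 / 2) * L) * ‖x‖ := Real.sqrt_sq
        (by positivity)
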